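/- arXiv:1705.01236 — 4 statements merged into one kernel-verified Lean document; each statement's English description precedes it below -/
import Mathlib

section
/- Let n ≥ 1, c ∈ (0,1), let W be a c-pinched n×n complex Hermitian matrix and let V be any n×n complex Hermitian matrix. Then tr(W⁻¹V) is a real number and (tr(W⁻¹V))² ≥ ½·(tr V)² − (3n·c²/(1−c)⁴)·‖V‖_F². (This is the linearization estimate for the contracted trace in the proof of Proposition 3.2 of the paper.) -/
open scoped ComplexOrder

/-- A matrix `W` is `c`-pinched if it is Hermitian and `(1−c)·1 ≤ W ≤ (1+c)·1` in the
sense of the positive-semidefinite order. -/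
def IsPinched {n : ℕ} (c : ℝ) (W : Matrix (Fin n) (Fin n) ℂ) : Prop :=
  W.IsHermitian ∧ (W - ((1 - c : ℝ) : ℂ) • 1).PosSemidef ∧
    (((1 + c : ℝ) : ℂ) • 1 - W).PosSemidef

/-- Squared Frobenius norm `‖V‖_F² = ∑_{j,k} |V_{jk}|²` of a complex matrix. -/
noncomputable def frobSq {n : ℕ} (V : Matrix (Fin n) (Fin n) ℂ) : ℝ :=
  ∑ j, ∑ k, Complex.normSq (V j k)

open Matrix

lemma frobSq_eq_trace {n : ℕ} (M : Matrix (Fin n) (Fin n) ℂ) :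
    frobSq M = ((Mᴴ * M).trace).re := by
  rw [frobSq, Matrix.trace, Complex.re_sum, Finset.sum_comm]
  refine Finset.sum_congr rfl fun j _ => ?_
  simp only [Matrix.diag_apply, Matrix.mul_apply, Matrix.conjTranspose_apply]
  rw [Complex.re_sum]
  refine Finset.sum_congr rfl fun k _ => ?_
  simp [← Complex.normSq_eq_conj_mul_self]

lemma psd_diag_re {n : ℕ} {M : Matrix (Fin n) (Fin n) ℂ} (h : M.PosSemidef) (i : Fin n) :
    0 ≤ (M i i).re := by
  have := h.re_dotProduct_nonneg (Pi.single i 1)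
  simpa [dotProduct, Matrix.mulVec_single, Pi.single_apply, Finset.sum_ite_eq] using this

set_option maxHeartbeats 1000000 in
/-- **Linearization estimate for the contracted trace.**  If `W` is `c`-pinched with
`c ∈ (0,1)` and `V` is Hermitian, then `tr(W⁻¹V)` is real and
`(tr(W⁻¹V))² ≥ ½·(tr V)² − (3n·c²/(1−c)⁴)·‖V‖_F²`. -/
theorem pinched_trace_estimate (n : ℕ) (hn : 1 ≤ n) (c : ℝ) (hc0 : 0 < c) (hc1 : c < 1)
    (W V : Matrix (Fin n) (Fin n) ℂ) (hW : IsPinched c W) (hV : V.IsHermitian) :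
    ((W⁻¹ * V).trace).im = 0 ∧
    ((W⁻¹ * V).trace.re) ^ 2 ≥
      (1 / 2 : ℝ) * (V.trace.re) ^ 2 - (3 * n * c ^ 2 / (1 - c) ^ 4) * frobSq V := by

  obtain ⟨hH, hlo, hhi⟩ := hW
  set U : Matrix (Fin n) (Fin n) ℂ := (hH.eigenvectorUnitary : Matrix (Fin n) (Fin n) ℂ) with hUdef
  set μ : Fin n → ℝ := hH.eigenvalues with hμdef
  set D : Matrix (Fin n) (Fin n) ℂ := Matrix.diagonal (fun i => (μ i : ℂ)) with hDdef
  have hUU : Uᴴ * U = 1 := by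
    simpa [Matrix.star_eq_conjTranspose] using Unitary.coe_star_mul_self hH.eigenvectorUnitary
  have hUU' : U * Uᴴ = 1 := by
    simpa [Matrix.star_eq_conjTranspose] using Unitary.coe_mul_star_self hH.eigenvectorUnitary
  have hspec : W = U * D * Uᴴ := by
    have := hH.spectral_theorem
    simpa [Matrix.star_eq_conjTranspose, hDdef, Function.comp_def] using this
  have hUWU : Uᴴ * W * U = D := by
    rw [hspec]; simp only [Matrix.mul_assoc]
    rw [← Matrix.mul_assoc Uᴴ U, hUU, Matrix.one_mul, Matrix.mul_one]
  -- eigenvalue bounds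
  have hμlo : ∀ i, 1 - c ≤ μ i := by
    intro i
    have hpsd : (D - ((1 - c : ℝ) : ℂ) • 1).PosSemidef := by
      have h2 := hlo.conjTranspose_mul_mul_same U
      have : Uᴴ * (W - ((1 - c : ℝ) : ℂ) • 1) * U = D - ((1 - c : ℝ) : ℂ) • 1 := by
        rw [Matrix.mul_sub, Matrix.sub_mul, Matrix.mul_smul, Matrix.mul_one,
          Matrix.smul_mul, hUWU, hUU]
      rwa [this] at h2
    have := psd_diag_re hpsd i
    simpa [hDdef, Matrix.diagonal_apply_eq, Matrix.one_apply_eq, Complex.sub_re] using this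
  have hμhi : ∀ i, μ i ≤ 1 + c := by
    intro i
    have hpsd : (((1 + c : ℝ) : ℂ) • 1 - D).PosSemidef := by
      have h2 := hhi.conjTranspose_mul_mul_same U
      have : Uᴴ * (((1 + c : ℝ) : ℂ) • 1 - W) * U = ((1 + c : ℝ) : ℂ) • 1 - D := by
        rw [Matrix.mul_sub, Matrix.sub_mul, Matrix.mul_smul, Matrix.mul_one,
          Matrix.smul_mul, hUWU, hUU]
      rwa [this] at h2
    have := psd_diag_re hpsd i
    simpa [hDdef, Matrix.diagonal_apply_eq, Matrix.one_apply_eq, Complex.sub_re] using this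
  have hμpos : ∀ i, 0 < μ i := fun i => lt_of_lt_of_le (by linarith) (hμlo i)
  -- inverse
  set Dinv : Matrix (Fin n) (Fin n) ℂ := Matrix.diagonal (fun i => ((μ i : ℂ))⁻¹) with hDinv
  have hWinv : W⁻¹ = U * Dinv * Uᴴ := by
    apply Matrix.inv_eq_right_inv
    rw [hspec]
    have hDD : D * Dinv = 1 := by
      rw [hDdef, hDinv, Matrix.diagonal_mul_diagonal]
      have : (fun i => (μ i : ℂ) * ((μ i : ℂ))⁻¹) = fun _ => 1 :=
        funext fun i => mul_inv_cancel₀ (by exact_mod_cast (hμpos i).ne')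
      rw [this, Matrix.diagonal_one]
    calc U * D * Uᴴ * (U * Dinv * Uᴴ) = U * (D * ((Uᴴ * U) * Dinv)) * Uᴴ := by
          simp only [Matrix.mul_assoc]
      _ = 1 := by rw [hUU, Matrix.one_mul, hDD, Matrix.mul_one, hUU']
  set V' : Matrix (Fin n) (Fin n) ℂ := Uᴴ * V * U with hV'def
  have hV' : V'.IsHermitian := Matrix.isHermitian_conjTranspose_mul_mul U hV
  have htr : (W⁻¹ * V).trace = (Dinv * V').trace := by
    rw [hWinv, hV'def]
    rw [Matrix.trace_mul_comm (U * Dinv * Uᴴ) V]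
    rw [show V * (U * Dinv * Uᴴ) = (V * U) * Dinv * Uᴴ by simp only [Matrix.mul_assoc],
      Matrix.trace_mul_cycle, ← Matrix.mul_assoc, Matrix.trace_mul_comm]
  have htrV : V.trace = V'.trace := by
    rw [hV'def, Matrix.trace_mul_cycle, hUU', Matrix.one_mul]
  have hfrob : frobSq V = frobSq V' := by
    rw [frobSq_eq_trace, frobSq_eq_trace]
    congr 1
    rw [hV'def]
    have : (Uᴴ * V * U)ᴴ * (Uᴴ * V * U) = Uᴴ * (Vᴴ * V) * U := by
      simp only [Matrix.conjTranspose_mul, Matrix.conjTranspose_conjTranspose,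
        Matrix.mul_assoc]
      rw [show U * (Uᴴ * (V * U)) = (U * Uᴴ) * (V * U) by simp only [Matrix.mul_assoc],
        hUU', Matrix.one_mul]
    rw [this, Matrix.trace_mul_cycle, hUU', Matrix.one_mul]
  -- diagonal entries of V' are real
  set v : Fin n → ℝ := fun i => (V' i i).re with hvdef
  have hdiag : ∀ i, V' i i = (v i : ℂ) := by
    intro i
    have : star (V' i i) = V' i i := by
      conv_rhs => rw [← hV'.eq]
      simp [Matrix.conjTranspose_apply]
    have him : (V' i i).im = 0 := by
      have := congrArg Complex.im this
      simp at this; linarith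
    exact (Complex.ext (by simp [hvdef]) (by simp [hvdef, him])).symm
  have htr2 : (Dinv * V').trace = ((∑ i, (μ i)⁻¹ * v i : ℝ) : ℂ) := by
    rw [Matrix.trace]
    rw [Complex.ofReal_sum]
    refine Finset.sum_congr rfl fun i _ => ?_
    rw [Matrix.diag_apply, hDinv, Matrix.diagonal_mul, hdiag i]
    push_cast
    ring
  have htrV2 : V.trace = ((∑ i, v i : ℝ) : ℂ) := by
    rw [htrV, Matrix.trace, Complex.ofReal_sum]
    exact Finset.sum_congr rfl fun i _ => hdiag i
  have hre : (W⁻¹ * V).trace = ((∑ i, (μ i)⁻¹ * v i : ℝ) : ℂ) := htr.trans htr2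
  constructor
  · rw [hre]; simp
  · rw [hre, htrV2, Complex.ofReal_re, Complex.ofReal_re]
    have h1c : (0:ℝ) < 1 - c := by linarith
    have hF0 : 0 ≤ frobSq V := by
      rw [frobSq]
      exact Finset.sum_nonneg fun _ _ => Finset.sum_nonneg fun _ _ => Complex.normSq_nonneg _
    have hdiagsum : ∑ i, v i ^ 2 ≤ frobSq V := by
      rw [hfrob, frobSq]
      refine Finset.sum_le_sum fun i _ => ?_
      have h1 : v i ^ 2 = Complex.normSq (V' i i) := by
        rw [hdiag i, Complex.normSq_ofReal]; ring
      rw [h1]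
      exact Finset.single_le_sum (fun k _ => Complex.normSq_nonneg _) (Finset.mem_univ i)
    have hti : ∀ i, ((μ i)⁻¹ - 1) ^ 2 ≤ c ^ 2 / (1 - c) ^ 2 := by
      intro i
      have hm0 := hμpos i
      have hm1 := hμlo i
      have hm2 := hμhi i
      have heq : ((μ i)⁻¹ - 1) ^ 2 = (1 - μ i) ^ 2 / (μ i) ^ 2 := by
        field_simp
      rw [heq, div_le_div_iff₀ (by positivity) (by positivity)]
      have ha : (1 - μ i) ^ 2 ≤ c ^ 2 := by nlinarith
      have hb : (1 - c) ^ 2 ≤ (μ i) ^ 2 := by nlinarith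
      nlinarith [sq_nonneg c, sq_nonneg (1 - c), mul_le_mul ha (le_refl ((1-c)^2)) (sq_nonneg _) (sq_nonneg c), mul_le_mul (le_refl (c^2)) hb (sq_nonneg _) (sq_nonneg c)]
    have hsum_t : ∑ i, ((μ i)⁻¹ - 1) ^ 2 ≤ (n : ℝ) * (c ^ 2 / (1 - c) ^ 2) := by
      calc ∑ i, ((μ i)⁻¹ - 1) ^ 2 ≤ ∑ _i : Fin n, c ^ 2 / (1 - c) ^ 2 :=
            Finset.sum_le_sum fun i _ => hti i
        _ = (n : ℝ) * (c ^ 2 / (1 - c) ^ 2) := by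
            rw [Finset.sum_const, Finset.card_univ, Fintype.card_fin, nsmul_eq_mul]
    have key : (∑ i, ((μ i)⁻¹ - 1) * v i) ^ 2 ≤ ((n : ℝ) * (c ^ 2 / (1 - c) ^ 2)) * frobSq V := by
      refine (Finset.sum_mul_sq_le_sq_mul_sq Finset.univ (fun i => (μ i)⁻¹ - 1) v).trans ?_
      exact mul_le_mul hsum_t hdiagsum (Finset.sum_nonneg fun _ _ => sq_nonneg _)
        (by positivity)
    have hK : ((n : ℝ) * (c ^ 2 / (1 - c) ^ 2)) * frobSq V ≤ (3 * n * c ^ 2 / (1 - c) ^ 4) * frobSq V := by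
      refine mul_le_mul_of_nonneg_right ?_ hF0
      have heq : (n : ℝ) * (c ^ 2 / (1 - c) ^ 2) = ((n : ℝ) * c ^ 2) / (1 - c) ^ 2 := by ring
      rw [heq, div_le_div_iff₀ (by positivity) (by positivity)]
      have hn0 : (0 : ℝ) ≤ n := Nat.cast_nonneg n
      have hle1 : (1 - c) ^ 2 ≤ 1 := by nlinarith
      nlinarith [mul_nonneg (mul_nonneg hn0 (sq_nonneg c)) (sq_nonneg (1 - c)), sq_nonneg (1-c)]
    have hsplit : ∑ i, (μ i)⁻¹ * v i = (∑ i, v i) + ∑ i, ((μ i)⁻¹ - 1) * v i := by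
      rw [← Finset.sum_add_distrib]
      exact Finset.sum_congr rfl fun i _ => by ring
    rw [hsplit]
    have hb2 : (∑ i, ((μ i)⁻¹ - 1) * v i) ^ 2 ≤ (3 * n * c ^ 2 / (1 - c) ^ 4) * frobSq V :=
      key.trans hK
    have final : ∀ x y K : ℝ, y ^ 2 ≤ K → (x + y) ^ 2 ≥ 1 / 2 * x ^ 2 - K := by
      intro x y K h
      nlinarith [sq_nonneg (x + 2 * y)]
    exact final _ _ _ hb2
end

section
/- For every n ≥ 1 and every ε ∈ (0,½) there exists c ∈ (0,1) such that for every c-pinched n×n complex Hermitian matrix W and every n×n complex Hermitian matrix V, the (real) quantity Q(W,V) := det W·((1 + log det W)·(tr(W⁻¹V))² − log det W · tr(W⁻¹·V·W⁻¹·V)) satisfies Q(W,V) ≥ (½ − ε)·(tr V)² − ε·‖V‖_F². (This is the pointwise coercivity estimate at the heart of Proposition 3.2 of the paper.) -/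
set_option maxHeartbeats 1000000

open scoped ComplexOrder

/-- The (real) quantity
`Q(W,V) = det W·((1 + log det W)·(tr(W⁻¹V))² − log det W · tr(W⁻¹·V·W⁻¹·V))`;
for `c`-pinched `W` and Hermitian `V` all constituents are real, so we take real parts. -/
noncomputable def Qcoer {n : ℕ} (W V : Matrix (Fin n) (Fin n) ℂ) : ℝ :=
  W.det.re * ((1 + Real.log W.det.re) * ((W⁻¹ * V).trace.re) ^ 2
    - Real.log W.det.re * ((W⁻¹ * V * W⁻¹ * V).trace.re))

open Matrix


lemma eig_ge {n:ℕ} (W : Matrix (Fin n) (Fin n) ℂ) (hW : W.IsHermitian) (a : ℝ)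
    (h : (W - (a:ℂ) • 1).PosSemidef) (i : Fin n) : a ≤ hW.eigenvalues i := by
  set x : Fin n → ℂ := ⇑(hW.eigenvectorBasis i) with hx
  have hnorm : star x ⬝ᵥ x = 1 := by
    have h1 := hW.eigenvectorBasis.orthonormal.1 i
    have h2 : (inner ℂ (hW.eigenvectorBasis i) (hW.eigenvectorBasis i) : ℂ) = 1 := by
      rw [inner_self_eq_norm_sq_to_K, h1]; norm_num
    rw [EuclideanSpace.inner_eq_star_dotProduct] at h2
    rw [dotProduct_comm]; exact h2
  have hmv : W *ᵥ x = (hW.eigenvalues i : ℂ) • x := by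
    simpa using hW.mulVec_eigenvectorBasis i
  have h0 := h.dotProduct_mulVec_nonneg x
  rw [Matrix.sub_mulVec, Matrix.smul_mulVec, Matrix.one_mulVec, dotProduct_sub,
    hmv, dotProduct_smul, dotProduct_smul, hnorm] at h0
  simp only [smul_eq_mul, mul_one] at h0
  have h3 : (0:ℂ) ≤ ((hW.eigenvalues i - a : ℝ) : ℂ) := by push_cast; exact h0
  rw [Complex.zero_le_real] at h3
  linarith

lemma eig_le {n:ℕ} (W : Matrix (Fin n) (Fin n) ℂ) (hW : W.IsHermitian) (a : ℝ)
    (h : ((a:ℂ) • 1 - W).PosSemidef) (i : Fin n) : hW.eigenvalues i ≤ a := by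
  set x : Fin n → ℂ := ⇑(hW.eigenvectorBasis i) with hx
  have hnorm : star x ⬝ᵥ x = 1 := by
    have h1 := hW.eigenvectorBasis.orthonormal.1 i
    have h2 : (inner ℂ (hW.eigenvectorBasis i) (hW.eigenvectorBasis i) : ℂ) = 1 := by
      rw [inner_self_eq_norm_sq_to_K, h1]; norm_num
    rw [EuclideanSpace.inner_eq_star_dotProduct] at h2
    rw [dotProduct_comm]; exact h2
  have hmv : W *ᵥ x = (hW.eigenvalues i : ℂ) • x := by
    simpa using hW.mulVec_eigenvectorBasis i
  have h0 := h.dotProduct_mulVec_nonneg x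
  rw [Matrix.sub_mulVec, Matrix.smul_mulVec, Matrix.one_mulVec, dotProduct_sub,
    hmv, dotProduct_smul, dotProduct_smul, hnorm] at h0
  simp only [smul_eq_mul, mul_one] at h0
  have h3 : (0:ℂ) ≤ ((a - hW.eigenvalues i : ℝ) : ℂ) := by push_cast; exact h0
  rw [Complex.zero_le_real] at h3
  linarith

lemma aux_coef (ε m : ℝ) (hε0 : 0 < ε) (hε1 : ε < 1/2) (hm0 : 0 < m) (hm256 : m ≤ 1/256) :
    (1/2-ε) ≤ (1-m)*(1-2*m)*(1-ε) := by
  nlinarith [mul_nonneg (mul_nonneg hm0.le hm0.le) (by linarith : (0:ℝ) ≤ 1-ε),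
    mul_le_mul_of_nonneg_right hm256 (by linarith : (0:ℝ) ≤ 1-ε)]

lemma aux_coefs (ε m : ℝ) (hε0 : 0 < ε) (hε1 : ε < 1/2) (hm : m = ε^2/64) : ε/16 + 8*m ≤ ε := by
  rw [hm]; nlinarith [mul_pos hε0 (by linarith : (0:ℝ) < 15/16 - ε/8)]

lemma core (n : ℕ) (hn : 1 ≤ n) (ε c : ℝ) (hε0 : 0 < ε) (hε1 : ε < 1/2)
    (hc : c = ε^2/(64*n))
    (μ : Fin n → ℝ) (hμlo : ∀ i, 1 - c ≤ μ i) (hμhi : ∀ i, μ i ≤ 1 + c)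
    (a : Fin n → ℝ) (r : Fin n → Fin n → ℝ) (hr0 : ∀ i j, 0 ≤ r i j)
    (hdiag : ∀ i, (a i)^2 ≤ r i i) :
    (∏ i, μ i) * ((1 + Real.log (∏ i, μ i)) * (∑ i, a i / μ i)^2
        - Real.log (∏ i, μ i) * (∑ i, ∑ j, r i j / (μ i * μ j)))
      ≥ (1/2 - ε) * (∑ i, a i)^2 - ε * (∑ i, ∑ j, r i j) := by
  have hnR : (1:ℝ) ≤ (n:ℝ) := by exact_mod_cast hn
  have hn0 : (0:ℝ) < (n:ℝ) := by linarith
  set m : ℝ := ε^2/64 with hmdef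
  have hm : (n:ℝ) * c = m := by rw [hc, hmdef]; field_simp
  have hc0 : 0 < c := by rw [hc]; positivity
  have hcm : c ≤ m := by
    rw [← hm]; nlinarith [mul_le_mul_of_nonneg_right hnR (le_of_lt hc0)]
  have hm256 : m ≤ 1/256 := by rw [hmdef]; nlinarith
  have hc256 : c ≤ 1/256 := le_trans hcm hm256
  have hm0 : 0 < m := by rw [hmdef]; positivity
  have hμpos : ∀ i, 0 < μ i := fun i => lt_of_lt_of_le (by linarith) (hμlo i)
  have hinv_hi : ∀ i, (μ i)⁻¹ ≤ 1 + 2*c := by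
    intro i
    rw [← one_div, div_le_iff₀ (hμpos i)]
    nlinarith [hμlo i]
  have hinv_lo : ∀ i, 1 - 2*c ≤ (μ i)⁻¹ := by
    intro i
    rw [← one_div, le_div_iff₀ (hμpos i)]
    nlinarith [hμhi i]
  set P : ℝ := ∏ i, μ i with hPdef
  set L : ℝ := Real.log P with hLdef
  set T : ℝ := ∑ i, a i / μ i with hTdef
  set t : ℝ := ∑ i, a i with htdef
  set S : ℝ := ∑ i, ∑ j, r i j / (μ i * μ j) with hSdef
  set F : ℝ := ∑ i, ∑ j, r i j with hFdef
  have hF0 : 0 ≤ F := Finset.sum_nonneg fun i _ => Finset.sum_nonneg fun j _ => hr0 i j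
  -- P bounds
  have hPlo : 1 - m ≤ P := by
    have h2 : 1 - (n:ℝ)*c ≤ (1-c)^n := by
      have := one_add_mul_le_pow (a := -c) (by linarith) n
      simpa [mul_comm, sub_eq_add_neg] using this
    have h1 : (1-c)^n ≤ P := by
      calc (1-c)^n = ∏ _i : Fin n, (1-c) := by simp
        _ ≤ P := Finset.prod_le_prod (fun i _ => by linarith) (fun i _ => hμlo i)
    rw [← hm]; linarith
  have hP0 : 0 < P := lt_of_lt_of_le (by linarith) hPlo
  have hPhi : P ≤ 2 := by
    have h1 : P ≤ (1+c)^n := by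
      calc P ≤ ∏ _i : Fin n, (1+c) :=
            Finset.prod_le_prod (fun i _ => le_of_lt (hμpos i)) (fun i _ => hμhi i)
        _ = (1+c)^n := by simp
    have h2 : (1-c)^n * (1+c)^n ≤ 1 := by
      rw [← mul_pow]
      apply pow_le_one₀ (by nlinarith) (by nlinarith)
    have h3 : 1 - m ≤ (1-c)^n := by
      have := one_add_mul_le_pow (a := -c) (by linarith) n
      rw [← hm]; simpa [mul_comm, sub_eq_add_neg] using this
    have h4 : (0:ℝ) < (1+c)^n := pow_pos (by linarith) n
    nlinarith
  -- L bounds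
  have hLsum : L = ∑ i, Real.log (μ i) := by
    rw [hLdef, hPdef, Real.log_prod]
    exact fun i _ => ne_of_gt (hμpos i)
  have hLhi : L ≤ m := by
    rw [hLsum, ← hm]
    calc ∑ i, Real.log (μ i) ≤ ∑ _i : Fin n, c := by
          apply Finset.sum_le_sum
          intro i _
          calc Real.log (μ i) ≤ μ i - 1 := Real.log_le_sub_one_of_pos (hμpos i)
            _ ≤ c := by linarith [hμhi i]
      _ = (n:ℝ)*c := by rw [Finset.sum_const, Finset.card_univ, Fintype.card_fin, nsmul_eq_mul]
  have hLlo : -(2*m) ≤ L := by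
    rw [hLsum, ← hm]
    have key : ∀ i : Fin n, -(2*c) ≤ Real.log (μ i) := by
      intro i
      have h1 : Real.log (μ i)⁻¹ ≤ (μ i)⁻¹ - 1 :=
        Real.log_le_sub_one_of_pos (inv_pos.mpr (hμpos i))
      rw [Real.log_inv] at h1
      nlinarith [hinv_hi i]
    calc -(2*((n:ℝ)*c)) = ∑ _i : Fin n, -(2*c) := by
          rw [Finset.sum_const, Finset.card_univ, Fintype.card_fin, nsmul_eq_mul]; ring
      _ ≤ ∑ i, Real.log (μ i) := Finset.sum_le_sum fun i _ => key i
  -- (T - t)^2 ≤ 4*c*m*F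
  have haF : ∑ i, (a i)^2 ≤ F := by
    rw [hFdef]
    apply Finset.sum_le_sum
    intro i _
    calc (a i)^2 ≤ r i i := hdiag i
      _ ≤ ∑ j, r i j := Finset.single_le_sum (fun j _ => hr0 i j) (Finset.mem_univ i)
  have hTt : (T - t)^2 ≤ 4*c*m*F := by
    have hdiff : T - t = ∑ i, a i * ((μ i)⁻¹ - 1) := by
      rw [hTdef, htdef, ← Finset.sum_sub_distrib]
      congr 1; ext i
      have := (hμpos i).ne'
      field_simp
    have hCS := Finset.sum_mul_sq_le_sq_mul_sq Finset.univ (fun i => a i) (fun i => (μ i)⁻¹ - 1)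
    have hsq : ∀ i : Fin n, ((μ i)⁻¹ - 1)^2 ≤ 4*c^2 := by
      intro i
      nlinarith [hinv_hi i, hinv_lo i]
    have hsum2 : ∑ i, ((μ i)⁻¹ - 1)^2 ≤ (n:ℝ) * (4*c^2) := by
      calc ∑ i, ((μ i)⁻¹ - 1)^2 ≤ ∑ _i : Fin n, 4*c^2 :=
            Finset.sum_le_sum fun i _ => hsq i
        _ = (n:ℝ) * (4*c^2) := by
            rw [Finset.sum_const, Finset.card_univ, Fintype.card_fin, nsmul_eq_mul]
    calc (T - t)^2 = (∑ i, a i * ((μ i)⁻¹ - 1))^2 := by rw [hdiff]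
      _ ≤ (∑ i, (a i)^2) * (∑ i, ((μ i)⁻¹-1)^2) := by simpa using hCS
      _ ≤ F * ((n:ℝ) * (4*c^2)) :=
          mul_le_mul haF hsum2 (Finset.sum_nonneg fun i _ => sq_nonneg _) hF0
      _ = 4*c*((n:ℝ)*c)*F := by ring
      _ = 4*c*m*F := by rw [hm]
  -- S bounds
  have hS0 : 0 ≤ S := Finset.sum_nonneg fun i _ => Finset.sum_nonneg fun j _ =>
    div_nonneg (hr0 i j) (le_of_lt (mul_pos (hμpos i) (hμpos j)))
  have hShi : S ≤ 4*F := by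
    have key : ∀ i j : Fin n, r i j / (μ i * μ j) ≤ 4 * r i j := by
      intro i j
      rw [div_le_iff₀ (mul_pos (hμpos i) (hμpos j))]
      have hmm : (1-c)*(1-c) ≤ μ i * μ j :=
        mul_le_mul (hμlo i) (hμlo j) (by linarith) (le_of_lt (hμpos i))
      have h14 : (1/4:ℝ) ≤ μ i * μ j := by nlinarith
      nlinarith [mul_le_mul_of_nonneg_left h14 (hr0 i j)]
    calc S ≤ ∑ i, ∑ j, 4 * r i j :=
          Finset.sum_le_sum fun i _ => Finset.sum_le_sum fun j _ => key i j
      _ = 4*F := by rw [hFdef, Finset.mul_sum]; congr 1; ext i; rw [Finset.mul_sum]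
  -- main chain
  have key2 : ε * ((1-ε)*t^2 - (4*c*m/ε)*F) ≤ ε * T^2 := by
    have hKF : ε * ((4*c*m/ε)*F) = 4*c*m*F := by field_simp
    rw [mul_sub, hKF]
    nlinarith [sq_nonneg (ε*t + (T - t)), mul_nonneg (le_of_lt hε0) (sq_nonneg (T - t)), hTt]
  have hT2 : (1-ε)*t^2 - (4*c*m/ε)*F ≤ T^2 := le_of_mul_le_mul_left key2 hε0
  have hstep1 : (1-m)*(1-2*m) ≤ P*(1+L) :=
    mul_le_mul hPlo (by linarith) (by linarith) (le_of_lt hP0)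
  have hA : (1-m)*(1-2*m)*T^2 ≤ P*(1+L)*T^2 :=
    mul_le_mul_of_nonneg_right hstep1 (sq_nonneg T)
  have hA2 : (1-m)*(1-2*m)*((1-ε)*t^2 - (4*c*m/ε)*F) ≤ (1-m)*(1-2*m)*T^2 :=
    mul_le_mul_of_nonneg_left hT2 (by nlinarith)
  have hKε : 0 ≤ 4*c*m/ε := by positivity
  have hK : 4*c*m/ε ≤ ε/16 := by
    rw [div_le_iff₀ hε0]
    nlinarith [hcm, hm256, hm0]
  have hA3 : (1-m)*(1-2*m)*(1-ε)*t^2 - (ε/16)*F ≤ (1-m)*(1-2*m)*((1-ε)*t^2 - (4*c*m/ε)*F) := by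
    have h0 : 0 ≤ (4*c*m/ε)*F := mul_nonneg hKε hF0
    have hsmall : (1-m)*(1-2*m) ≤ 1 := by nlinarith
    have h1 : (1-m)*(1-2*m)*((4*c*m/ε)*F) ≤ 1 * ((4*c*m/ε)*F) :=
      mul_le_mul_of_nonneg_right hsmall h0
    have h2 : (4*c*m/ε)*F ≤ (ε/16)*F := mul_le_mul_of_nonneg_right hK hF0
    nlinarith
  have hD : P*L*S ≤ 8*m*F := by
    have h8 : 0 ≤ 8*m*F := mul_nonneg (mul_nonneg (by norm_num) (le_of_lt hm0)) hF0
    rcases le_or_gt L 0 with hL | hL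
    · have h1 : P*L*S ≤ 0 :=
        mul_nonpos_of_nonpos_of_nonneg (mul_nonpos_of_nonneg_of_nonpos (le_of_lt hP0) hL) hS0
      linarith
    · have hPL : P*L ≤ 2*m := mul_le_mul hPhi hLhi (le_of_lt hL) (by norm_num)
      have h1 : (P*L)*S ≤ (2*m)*(4*F) :=
        mul_le_mul hPL hShi hS0 (by linarith)
      have h2 : (2*m)*(4*F) = 8*m*F := by ring
      linarith
  have hcoef : (1/2-ε)*t^2 ≤ (1-m)*(1-2*m)*(1-ε)*t^2 :=
    mul_le_mul_of_nonneg_right (aux_coef ε m hε0 hε1 hm0 hm256) (sq_nonneg t)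
  have hcoefF : (ε/16)*F + 8*m*F ≤ ε*F := by
    have h1 := mul_le_mul_of_nonneg_right (aux_coefs ε m hε0 hε1 hmdef) hF0
    have h2 : (ε/16 + 8*m)*F = (ε/16)*F + 8*m*F := by ring
    linarith
  calc P * ((1+L)*T^2 - L*S) = P*(1+L)*T^2 - P*L*S := by ring
    _ ≥ (1/2-ε)*t^2 - ε*F := by linarith

section red2
variable {n : ℕ} (U V : Matrix (Fin n) (Fin n) ℂ)

lemma trace_conj (X : Matrix (Fin n) (Fin n) ℂ) (hU2 : star U * U = 1) :
    (U * X * star U).trace = X.trace := by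
  rw [Matrix.trace_mul_cycle, hU2, Matrix.one_mul]

lemma conjM_mul (hU2 : star U * U = 1) (X Y : Matrix (Fin n) (Fin n) ℂ) :
    (U * X * star U) * (U * Y * star U) = U * (X * Y) * star U := by
  have cancel : ∀ Z : Matrix (Fin n) (Fin n) ℂ, star U * (U * Z) = Z := fun Z => by
    rw [← Matrix.mul_assoc, hU2, Matrix.one_mul]
  simp only [Matrix.mul_assoc]
  rw [cancel]

lemma diag_inv (hU1 : U * star U = 1) (hU2 : star U * U = 1) (d : Fin n → ℂ)
    (hd : ∀ i, d i ≠ 0) :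
    (U * Matrix.diagonal d * star U)⁻¹ = U * Matrix.diagonal (fun i => (d i)⁻¹) * star U := by
  apply Matrix.inv_eq_right_inv
  rw [conjM_mul U hU2, Matrix.diagonal_mul_diagonal]
  have h : (fun i => d i * (d i)⁻¹) = fun _ => (1:ℂ) := by
    funext i; exact mul_inv_cancel₀ (hd i)
  rw [h, Matrix.diagonal_one, Matrix.mul_one, hU1]

lemma conj_diag_mul_eq (hU1 : U * star U = 1) (d : Fin n → ℂ) :
    (U * Matrix.diagonal d * star U) * V
      = U * (Matrix.diagonal d * (star U * V * U)) * star U := by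
  simp only [Matrix.mul_assoc]
  rw [hU1, Matrix.mul_one]

lemma tr_conj_diag (hU1 : U * star U = 1) (hU2 : star U * U = 1) (d : Fin n → ℂ) :
    ((U * Matrix.diagonal d * star U) * V).trace
      = ∑ i, d i * (star U * V * U) i i := by
  rw [conj_diag_mul_eq U V hU1 d, trace_conj U _ hU2]
  simp [Matrix.trace, Matrix.diag, Matrix.mul_apply, Matrix.diagonal_apply, Finset.mul_sum]

lemma tr_conj_diag2 (hU1 : U * star U = 1) (hU2 : star U * U = 1) (d : Fin n → ℂ) :
    ((U * Matrix.diagonal d * star U) * V * (U * Matrix.diagonal d * star U) * V).trace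
      = ∑ i, ∑ j, (d i * (star U * V * U) i j) * (d j * (star U * V * U) j i) := by
  set A := star U * V * U with hA
  have h1 : (U * Matrix.diagonal d * star U) * V = U * (Matrix.diagonal d * A) * star U :=
    conj_diag_mul_eq U V hU1 d
  have h2 : (U * Matrix.diagonal d * star U) * V * (U * Matrix.diagonal d * star U) * V
      = ((U * Matrix.diagonal d * star U) * V) * ((U * Matrix.diagonal d * star U) * V) := by
    simp only [Matrix.mul_assoc]
  rw [h2, h1, conjM_mul U hU2, trace_conj U _ hU2]
  simp only [Matrix.trace, Matrix.diag, Matrix.mul_apply, Matrix.diagonal_apply,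
    ite_mul, zero_mul, Finset.sum_ite_eq, Finset.mem_univ, if_true]

lemma tr_conj_V (hU1 : U * star U = 1) : (star U * V * U).trace = V.trace := by
  rw [Matrix.trace_mul_cycle, hU1, Matrix.one_mul]

lemma frob_conj (hU1 : U * star U = 1) (hU2 : star U * U = 1) :
    frobSq V = ∑ i, ∑ j, Complex.normSq ((star U * V * U) i j) := by
  have key : ∀ M : Matrix (Fin n) (Fin n) ℂ,
      (Mᴴ * M).trace = ((∑ i, ∑ j, Complex.normSq (M i j) : ℝ) : ℂ) := by
    intro M
    have : (Mᴴ * M).trace = ∑ i, ∑ j, (starRingEnd ℂ) (M j i) * M j i := by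
      simp [Matrix.trace, Matrix.diag, Matrix.mul_apply, Matrix.conjTranspose_apply]
    rw [this, Finset.sum_comm]
    push_cast
    congr 1; funext i; congr 1; funext j
    rw [mul_comm, Complex.mul_conj]
  have hAH : (star U * V * U)ᴴ = star U * Vᴴ * U := by
    simp [Matrix.conjTranspose_mul, Matrix.star_eq_conjTranspose, Matrix.mul_assoc]
  have hprod : (star U * V * U)ᴴ * (star U * V * U) = star U * (Vᴴ * V) * U := by
    rw [hAH]
    have cancel : ∀ Z : Matrix (Fin n) (Fin n) ℂ, U * (star U * Z) = Z := fun Z => by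
      rw [← Matrix.mul_assoc, hU1, Matrix.one_mul]
    simp only [Matrix.mul_assoc]
    rw [cancel]
  have htr : ((star U * V * U)ᴴ * (star U * V * U)).trace = (Vᴴ * V).trace := by
    rw [hprod, Matrix.trace_mul_cycle, hU1, Matrix.one_mul]
  have h1 := key (star U * V * U)
  have h2 := key V
  rw [htr, h2] at h1
  have h3 := Complex.ofReal_inj.mp h1
  rw [frobSq, h3]

end red2

section spec
variable {n : ℕ} (W : Matrix (Fin n) (Fin n) ℂ) (hW : W.IsHermitian)

lemma spectral' :
    W = (hW.eigenvectorUnitary : Matrix (Fin n) (Fin n) ℂ)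
      * Matrix.diagonal (fun i => ((hW.eigenvalues i : ℝ) : ℂ))
      * star (hW.eigenvectorUnitary : Matrix (Fin n) (Fin n) ℂ) := by
  conv_lhs => rw [hW.spectral_theorem]
  rfl

lemma det' : W.det = ∏ i, ((hW.eigenvalues i : ℝ) : ℂ) := hW.det_eq_prod_eigenvalues

end spec


/-- **Pointwise coercivity estimate** (heart of Proposition 3.2): for every `n ≥ 1` and
`ε ∈ (0,½)` there is `c ∈ (0,1)` such that for every `c`-pinched `W` and Hermitian `V`,
`Q(W,V) ≥ (½ − ε)·(tr V)² − ε·‖V‖_F²`. -/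
theorem pointwise_coercivity (n : ℕ) (hn : 1 ≤ n) (ε : ℝ) (hε0 : 0 < ε) (hε1 : ε < 1 / 2) :
    ∃ c : ℝ, 0 < c ∧ c < 1 ∧
      ∀ W V : Matrix (Fin n) (Fin n) ℂ, IsPinched c W → V.IsHermitian →
        Qcoer W V ≥ (1 / 2 - ε) * (V.trace.re) ^ 2 - ε * frobSq V := by
  have hnR : (1:ℝ) ≤ (n:ℝ) := by exact_mod_cast hn
  have hn0 : (0:ℝ) < (n:ℝ) := by linarith
  set c : ℝ := ε^2/(64*(n:ℝ)) with hcdef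
  have hc0 : 0 < c := by rw [hcdef]; positivity
  have hc256 : c ≤ 1/256 := by
    rw [hcdef, div_le_iff₀ (by positivity)]
    nlinarith
  refine ⟨c, hc0, by linarith, ?_⟩
  intro W V hpin hV
  obtain ⟨hW, hlow, hhigh⟩ := hpin
  have hevlo : ∀ i, 1 - c ≤ hW.eigenvalues i := fun i => eig_ge W hW (1-c) hlow i
  have hevhi : ∀ i, hW.eigenvalues i ≤ 1 + c := fun i => eig_le W hW (1+c) hhigh i
  obtain ⟨U, ev, hU1, hU2, hWeq, hlo', hhi', hdet⟩ :
      ∃ (U : Matrix (Fin n) (Fin n) ℂ) (ev : Fin n → ℝ),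
        U * star U = 1 ∧ star U * U = 1 ∧
        W = U * Matrix.diagonal (fun i => ((ev i : ℝ) : ℂ)) * star U ∧
        (∀ i, 1 - c ≤ ev i) ∧ (∀ i, ev i ≤ 1 + c) ∧ W.det = ∏ i, ((ev i : ℝ) : ℂ) :=
    ⟨hW.eigenvectorUnitary, hW.eigenvalues,
      (Matrix.mem_unitaryGroup_iff).mp hW.eigenvectorUnitary.2,
      (Matrix.mem_unitaryGroup_iff').mp hW.eigenvectorUnitary.2,
      spectral' W hW, hevlo, hevhi, det' W hW⟩
  have hev0 : ∀ i, 0 < ev i := fun i => lt_of_lt_of_le (by linarith) (hlo' i)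
  set A : Matrix (Fin n) (Fin n) ℂ := star U * V * U with hAdef
  have hA : A.IsHermitian := by
    have := Matrix.isHermitian_conjTranspose_mul_mul U hV
    rwa [← Matrix.star_eq_conjTranspose] at this
  set a : Fin n → ℝ := fun i => (A i i).re with hadef
  set r : Fin n → Fin n → ℝ := fun i j => Complex.normSq (A i j) with hrdef
  have hAii : ∀ i, A i i = ((a i : ℝ) : ℂ) := fun i => (hA.coe_re_apply_self i).symm
  have hprod_entry : ∀ i j, A i j * A j i = ((r i j : ℝ) : ℂ) := by
    intro i j
    rw [← hA.apply j i, Complex.star_def, Complex.mul_conj]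
  have hd' : ∀ i, ((ev i : ℝ):ℂ) ≠ 0 := fun i => by
    exact_mod_cast (hev0 i).ne'
  have hinv : W⁻¹ = U * Matrix.diagonal (fun i => (((ev i : ℝ):ℂ))⁻¹) * star U := by
    rw [hWeq]; exact diag_inv U hU1 hU2 _ hd'
  have hdet_re : W.det.re = ∏ i, ev i := by
    rw [hdet, ← Complex.ofReal_prod]; exact Complex.ofReal_re _
  have htr1re : (W⁻¹ * V).trace.re = ∑ i, a i / ev i := by
    have h : (W⁻¹ * V).trace = ((∑ i, a i / ev i : ℝ) : ℂ) := by
      rw [hinv, tr_conj_diag U V hU1 hU2]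
      push_cast
      refine Finset.sum_congr rfl fun i _ => ?_
      rw [← hAdef, hAii i, div_eq_inv_mul]
    rw [h, Complex.ofReal_re]
  have htr2re : (W⁻¹ * V * W⁻¹ * V).trace.re = ∑ i, ∑ j, r i j / (ev i * ev j) := by
    have h : (W⁻¹ * V * W⁻¹ * V).trace = ((∑ i, ∑ j, r i j / (ev i * ev j) : ℝ) : ℂ) := by
      rw [hinv, tr_conj_diag2 U V hU1 hU2]
      push_cast
      refine Finset.sum_congr rfl fun i _ => Finset.sum_congr rfl fun j _ => ?_
      rw [← hAdef]
      calc ((ev i : ℂ))⁻¹ * A i j * ((ev j : ℂ)⁻¹ * A j i)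
          = (A i j * A j i) * (((ev i : ℂ)) * (ev j : ℂ))⁻¹ := by
            rw [mul_inv]; ring
        _ = ((r i j : ℝ) : ℂ) / (((ev i : ℂ)) * ((ev j : ℂ))) := by
            rw [hprod_entry i j, div_eq_mul_inv]
    rw [h, Complex.ofReal_re]
  have htrVre : V.trace.re = ∑ i, a i := by
    have h := tr_conj_V U V hU1
    have h2 : A.trace = ((∑ i, a i : ℝ) : ℂ) := by
      rw [Matrix.trace]
      push_cast
      exact Finset.sum_congr rfl fun i _ => hAii i
    rw [← h]
    rw [← hAdef] at *
    rw [h2, Complex.ofReal_re]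
  have hfrob : frobSq V = ∑ i, ∑ j, r i j := frob_conj U V hU1 hU2
  have hr0 : ∀ i j, 0 ≤ r i j := fun i j => Complex.normSq_nonneg _
  have hdiag : ∀ i, (a i)^2 ≤ r i i := by
    intro i
    have : r i i = (a i)^2 := by
      show Complex.normSq (A i i) = (a i)^2
      rw [hAii i, Complex.normSq_ofReal]; ring
    linarith
  rw [Qcoer, hdet_re, htr1re, htr2re, htrVre, hfrob]
  exact core n hn ε c hε0 hε1 hcdef ev hlo' hhi' a r hr0 hdiag
end

section
/- Let n ≥ 1 and let u : ℂⁿ → ℝ be a C³ function. For x ∈ ℂⁿ let G(x) be the n×n complex matrix with entries G(x)_{jk} := ∂_j∂_{\bar k} u(x), and let A(x) := adjugate(G(x)), so that G(x)·A(x) = A(x)·G(x) = det(G(x))·1. Then for every index i and every x ∈ ℂⁿ: ∑_k ∂_k( x ↦ A(x)_{ik} )(x) = 0, and ∑_k ∂_{\bar k}( x ↦ A(x)_{ki} )(x) = 0. (This is the Kähler divergence-free identity ∂_a(g^{i\bar j} det(g_{i\bar j})) = 0, equation (1.4) of the paper, for metrics given by a potential.) -/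
/-- The Wirtinger derivative `∂_j f` of `f : ℂⁿ → ℂ`:
`∂_j f(x) = ½(Df(x)[e_j] − i·Df(x)[i·e_j])` with `Df` the real Fréchet derivative. -/
noncomputable def wder {n : ℕ} (j : Fin n) (f : EuclideanSpace ℂ (Fin n) → ℂ)
    (x : EuclideanSpace ℂ (Fin n)) : ℂ :=
  (1 / 2 : ℂ) * (fderiv ℝ f x (EuclideanSpace.single j 1)
    - Complex.I * fderiv ℝ f x (Complex.I • EuclideanSpace.single j 1))

/-- The conjugate Wirtinger derivative `∂_{\bar j} f`:
`∂_{\bar j} f(x) = ½(Df(x)[e_j] + i·Df(x)[i·e_j])`. -/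
noncomputable def wderBar {n : ℕ} (j : Fin n) (f : EuclideanSpace ℂ (Fin n) → ℂ)
    (x : EuclideanSpace ℂ (Fin n)) : ℂ :=
  (1 / 2 : ℂ) * (fderiv ℝ f x (EuclideanSpace.single j 1)
    + Complex.I * fderiv ℝ f x (Complex.I • EuclideanSpace.single j 1))

/-- The complex Hessian `(∂_j∂_{\bar k} u(x))_{j,k}` of a real-valued function `u`. -/
noncomputable def cHessian {n : ℕ} (u : EuclideanSpace ℂ (Fin n) → ℝ)
    (x : EuclideanSpace ℂ (Fin n)) : Matrix (Fin n) (Fin n) ℂ :=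
  fun j k => wder j (wderBar k fun y => (u y : ℂ)) x

set_option maxHeartbeats 1000000

open Matrix Finset Complex
noncomputable section
variable {n : ℕ}

def pd (v : EuclideanSpace ℂ (Fin n)) (f : EuclideanSpace ℂ (Fin n) → ℂ)
    (x : EuclideanSpace ℂ (Fin n)) : ℂ := fderiv ℝ f x v

def wop (c : ℂ) (j : Fin n) (f : EuclideanSpace ℂ (Fin n) → ℂ)
    (x : EuclideanSpace ℂ (Fin n)) : ℂ :=
  (1 / 2 : ℂ) * (pd (EuclideanSpace.single j 1) f x
    + c * pd (Complex.I • EuclideanSpace.single j 1) f x)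

lemma pd_const (v : EuclideanSpace ℂ (Fin n)) (c : ℂ) (x) :
    pd v (fun _ => c) x = 0 := by simp [pd]

lemma wop_const (c : ℂ) (j : Fin n) (d : ℂ) (x) :
    wop c j (fun _ => d) x = 0 := by simp [wop, pd_const]

lemma pd_sum {ι : Type*} (v : EuclideanSpace ℂ (Fin n)) {s : Finset ι}
    {f : ι → EuclideanSpace ℂ (Fin n) → ℂ} {x}
    (h : ∀ b ∈ s, DifferentiableAt ℝ (f b) x) :
    pd v (fun y => ∑ b ∈ s, f b y) x = ∑ b ∈ s, pd v (f b) x := by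
  simp only [pd, fderiv_fun_sum h]; simp

lemma pd_const_mul (v : EuclideanSpace ℂ (Fin n)) {f : EuclideanSpace ℂ (Fin n) → ℂ} {x}
    (hf : DifferentiableAt ℝ f x) (c : ℂ) :
    pd v (fun y => c * f y) x = c * pd v f x := by
  simp [pd, fderiv_const_mul hf c]

lemma pd_add (v : EuclideanSpace ℂ (Fin n)) {f g : EuclideanSpace ℂ (Fin n) → ℂ} {x}
    (hf : DifferentiableAt ℝ f x) (hg : DifferentiableAt ℝ g x) :
    pd v (fun y => f y + g y) x = pd v f x + pd v g x := by
  simp [pd, fderiv_fun_add hf hg]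

lemma pd_prod (v : EuclideanSpace ℂ (Fin n)) {ι : Type*} [DecidableEq ι] {s : Finset ι}
    {f : ι → EuclideanSpace ℂ (Fin n) → ℂ} {x}
    (h : ∀ b ∈ s, DifferentiableAt ℝ (f b) x) :
    pd v (fun y => ∏ b ∈ s, f b y) x
      = ∑ b ∈ s, (∏ a ∈ s.erase b, f a x) * pd v (f b) x := by
  have H := HasFDerivAt.finset_prod (u := s) (g := f)
    (g' := fun b => fderiv ℝ (f b) x) (x := x)
    (fun b hb => (h b hb).hasFDerivAt)
  simp only [pd, H.fderiv]
  simp [smul_eq_mul]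

lemma contDiff_pd {N m : WithTop ℕ∞} {f : EuclideanSpace ℂ (Fin n) → ℂ}
    (hf : ContDiff ℝ N f) (h : m + 1 ≤ N) (v : EuclideanSpace ℂ (Fin n)) :
    ContDiff ℝ m (pd v f) :=
  (hf.fderiv_right h).clm_apply contDiff_const

lemma pd_comm {f : EuclideanSpace ℂ (Fin n) → ℂ} (hf : ContDiff ℝ 2 f)
    (v w x : EuclideanSpace ℂ (Fin n)) :
    pd v (pd w f) x = pd w (pd v f) x := by
  have h1 : ∀ y, HasFDerivAt f (fderiv ℝ f y) y := fun y =>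
    (hf.differentiable two_ne_zero y).hasFDerivAt
  have hC1 : ContDiff ℝ 1 (fderiv ℝ f) := hf.fderiv_right le_rfl
  have h2 : HasFDerivAt (fderiv ℝ f) (fderiv ℝ (fderiv ℝ f) x) x :=
    ((hC1.differentiable one_ne_zero) x).hasFDerivAt
  have key : ∀ a : EuclideanSpace ℂ (Fin n), pd a f = fun y => fderiv ℝ f y a := by
    intro a; rfl
  have ev : ∀ a : EuclideanSpace ℂ (Fin n),
      fderiv ℝ (fun y => fderiv ℝ f y a) x = (ContinuousLinearMap.apply ℝ ℂ a).comp
        (fderiv ℝ (fderiv ℝ f) x) := by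
    intro a
    exact ((ContinuousLinearMap.apply ℝ ℂ a).hasFDerivAt.comp x h2).fderiv
  have : pd v (pd w f) x = fderiv ℝ (fderiv ℝ f) x v w := by
    rw [pd, key w, ev w]; rfl
  rw [this, pd, key v, ev v]
  exact (second_derivative_symmetric h1 h2 w v).symm

lemma contDiff_wop {N m : WithTop ℕ∞} {f : EuclideanSpace ℂ (Fin n) → ℂ}
    (hf : ContDiff ℝ N f) (h : m + 1 ≤ N) (c : ℂ) (j : Fin n) :
    ContDiff ℝ m (wop c j f) :=
  contDiff_const.mul ((contDiff_pd hf h _).add (contDiff_const.mul (contDiff_pd hf h _)))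

lemma wop_sum {ι : Type*} (c : ℂ) (j : Fin n) {s : Finset ι}
    {f : ι → EuclideanSpace ℂ (Fin n) → ℂ} {x}
    (h : ∀ b ∈ s, DifferentiableAt ℝ (f b) x) :
    wop c j (fun y => ∑ b ∈ s, f b y) x = ∑ b ∈ s, wop c j (f b) x := by
  simp only [wop, pd_sum _ h]
  simp [Finset.mul_sum, Finset.sum_add_distrib, mul_add]


lemma wop_const_mul (c : ℂ) (j : Fin n) {f : EuclideanSpace ℂ (Fin n) → ℂ} {x}
    (hf : DifferentiableAt ℝ f x) (d : ℂ) :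
    wop c j (fun y => d * f y) x = d * wop c j f x := by
  simp only [wop, pd_const_mul _ hf]
  ring

lemma wop_prod (c : ℂ) (j : Fin n) {ι : Type*} [DecidableEq ι] {s : Finset ι}
    {f : ι → EuclideanSpace ℂ (Fin n) → ℂ} {x}
    (h : ∀ b ∈ s, DifferentiableAt ℝ (f b) x) :
    wop c j (fun y => ∏ b ∈ s, f b y) x
      = ∑ b ∈ s, (∏ a ∈ s.erase b, f a x) * wop c j (f b) x := by
  simp only [wop, pd_prod _ h, Finset.mul_sum]
  rw [← Finset.sum_add_distrib, Finset.mul_sum]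
  apply Finset.sum_congr rfl
  intro b _
  ring

lemma wop_comm (c₁ c₂ : ℂ) (j k : Fin n) {f : EuclideanSpace ℂ (Fin n) → ℂ}
    (hf : ContDiff ℝ 2 f) (x : EuclideanSpace ℂ (Fin n)) :
    wop c₁ j (wop c₂ k f) x = wop c₂ k (wop c₁ j f) x := by
  have hd : ∀ v : EuclideanSpace ℂ (Fin n), ∀ y, DifferentiableAt ℝ (pd v f) y := fun v y =>
    ((contDiff_pd (m := 1) hf (by norm_num) v).differentiable one_ne_zero).differentiableAt
  have expand : ∀ (c : ℂ) (j : Fin n) (v : EuclideanSpace ℂ (Fin n)) (y),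
      pd v (wop c j f) y = (1 / 2 : ℂ) * (pd v (pd (EuclideanSpace.single j 1) f) y
        + c * pd v (pd (Complex.I • EuclideanSpace.single j 1) f) y) := by
    intro c j v y
    have : wop c j f = fun z => (1 / 2 : ℂ) * (pd (EuclideanSpace.single j 1) f z
        + c * pd (Complex.I • EuclideanSpace.single j 1) f z) := rfl
    rw [this, pd_const_mul _ (((hd _ y).fun_add ((hd _ y).const_mul c)) ) _,
      pd_add _ (hd _ y) ((hd _ y).const_mul c), pd_const_mul _ (hd _ y)]
  simp only [wop, expand]
  rw [pd_comm hf, pd_comm hf (EuclideanSpace.single j 1),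
    pd_comm hf (Complex.I • EuclideanSpace.single j 1),
    pd_comm hf (Complex.I • EuclideanSpace.single j 1)]
  ring


lemma wop_det (c : ℂ) (j : Fin n) (M : EuclideanSpace ℂ (Fin n) → Matrix (Fin n) (Fin n) ℂ)
    (x : EuclideanSpace ℂ (Fin n))
    (hM : ∀ a b, DifferentiableAt ℝ (fun y => M y a b) x) :
    wop c j (fun y => (M y).det) x
      = ∑ a, ((M x).updateRow a (fun b => wop c j (fun y => M y a b) x)).det := by
  classical
  set R : Fin n → Fin n → ℂ := fun a b => wop c j (fun y => M y a b) x with hR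
  have hprodd : ∀ σ : Equiv.Perm (Fin n),
      DifferentiableAt ℝ (fun y => ∏ b, M y (σ b) b) x := by
    intro σ
    have H := HasFDerivAt.finset_prod (u := Finset.univ) (g := fun b y => M y (σ b) b)
      (g' := fun b => fderiv ℝ (fun y => M y (σ b) b) x) (x := x)
      (fun b _ => (hM (σ b) b).hasFDerivAt)
    exact H.differentiableAt
  have hdet : (fun y => (M y).det)
      = fun y => ∑ σ : Equiv.Perm (Fin n),
          ((Equiv.Perm.sign σ : ℤ) : ℂ) * ∏ b, M y (σ b) b := by
    funext y; exact Matrix.det_apply' (M y)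
  rw [hdet, wop_sum c j (fun σ _ => (hprodd σ).const_mul _)]
  have hlhs : ∀ σ : Equiv.Perm (Fin n),
      wop c j (fun y => ((Equiv.Perm.sign σ : ℤ) : ℂ) * ∏ b, M y (σ b) b) x
        = ((Equiv.Perm.sign σ : ℤ) : ℂ)
            * ∑ b, (∏ a ∈ Finset.univ.erase b, M x (σ a) a) * R (σ b) b := by
    intro σ
    rw [wop_const_mul c j (hprodd σ), wop_prod c j (fun b _ => hM (σ b) b)]
  simp only [hlhs]
  have hrow : ∀ (a : Fin n) (σ : Equiv.Perm (Fin n)),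
      (∏ b, ((M x).updateRow a (R a)) (σ b) b)
        = R a (σ⁻¹ a) * ∏ b ∈ Finset.univ.erase (σ⁻¹ a), M x (σ b) b := by
    intro a σ
    rw [← Finset.mul_prod_erase Finset.univ _ (Finset.mem_univ (σ⁻¹ a))]
    congr 1
    · rw [show σ (σ⁻¹ a) = a from σ.apply_symm_apply a, Matrix.updateRow_self]
    · apply Finset.prod_congr rfl
      intro b hb
      have hba : σ b ≠ a := by
        intro hcontra
        exact (Finset.mem_erase.mp hb).1 (by
          rw [← hcontra, Equiv.Perm.inv_def, Equiv.symm_apply_apply])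
      rw [Matrix.updateRow_ne hba]
  have hRHS : ∀ a : Fin n, ((M x).updateRow a (R a)).det
      = ∑ σ : Equiv.Perm (Fin n),
          ((Equiv.Perm.sign σ : ℤ) : ℂ) * ∏ b, ((M x).updateRow a (R a)) (σ b) b :=
    fun a => Matrix.det_apply' _
  simp only [hR] at hRHS ⊢
  rw [show (∑ a, ((M x).updateRow a fun b => wop c j (fun y => M y a b) x).det)
      = ∑ a, ∑ σ : Equiv.Perm (Fin n), ((Equiv.Perm.sign σ : ℤ) : ℂ)
          * ∏ b, ((M x).updateRow a (fun b => wop c j (fun y => M y a b) x)) (σ b) b from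
    Finset.sum_congr rfl fun a _ => hRHS a]
  have : ∀ a : Fin n, ∑ σ : Equiv.Perm (Fin n),
        ((Equiv.Perm.sign σ : ℤ) : ℂ) * ∏ b, ((M x).updateRow a (R a)) (σ b) b
      = ∑ σ : Equiv.Perm (Fin n), ((Equiv.Perm.sign σ : ℤ) : ℂ)
          * (R a (σ⁻¹ a) * ∏ b ∈ Finset.univ.erase (σ⁻¹ a), M x (σ b) b) := by
    intro a
    exact Finset.sum_congr rfl fun σ _ => by rw [hrow a σ]
  simp only [hR] at this
  simp only [this]
  rw [Finset.sum_comm]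
  apply Finset.sum_congr rfl
  intro σ _
  rw [← Equiv.sum_comp σ (fun a => ((Equiv.Perm.sign σ : ℤ) : ℂ)
      * (R a (σ⁻¹ a) * ∏ b ∈ Finset.univ.erase (σ⁻¹ a), M x (σ b) b))]
  simp only [Equiv.Perm.inv_def, Equiv.symm_apply_apply]
  rw [Finset.mul_sum]
  apply Finset.sum_congr rfl
  intro b _
  ring


lemma main_aux (c : ℂ) (F : EuclideanSpace ℂ (Fin n) → Matrix (Fin n) (Fin n) ℂ)
    (i : Fin n) (x : EuclideanSpace ℂ (Fin n))
    (hF : ∀ a b, ContDiff ℝ 1 (fun y => F y a b))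
    (hsymm : ∀ k a b, wop c k (fun y => F y a b) x = wop c a (fun y => F y k b) x) :
    ∑ k, wop c k (fun y => ((F y).updateRow k (Pi.single i 1)).det) x = 0 := by
  classical
  have hMd : ∀ (k a b : Fin n),
      DifferentiableAt ℝ (fun y => ((F y).updateRow k (Pi.single i 1)) a b) x := by
    intro k a b
    by_cases h : a = k
    · subst h
      simp only [Matrix.updateRow_self]
      exact differentiableAt_const _
    · simp only [Matrix.updateRow_ne h]
      exact ((hF a b).differentiable one_ne_zero).differentiableAt
  set D : Fin n → Fin n → ℂ := fun k a =>
    (((F x).updateRow k (Pi.single i 1)).updateRow a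
      (fun b => wop c k (fun y => ((F y).updateRow k (Pi.single i 1)) a b) x)).det with hD
  have hsum : ∀ k, wop c k (fun y => ((F y).updateRow k (Pi.single i 1)).det) x
      = ∑ a, D k a := fun k => wop_det c k _ x (hMd k)
  have hdiag : ∀ k, D k k = 0 := by
    intro k
    apply Matrix.det_eq_zero_of_row_eq_zero k
    intro b
    simp only [Matrix.updateRow_self]
    exact wop_const c k _ x
  have hoff : ∀ k a, a ≠ k → D k a =
      (((F x).updateRow k (Pi.single i 1)).updateRow a
        (fun b => wop c k (fun y => F y a b) x)).det := by
    intro k a h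
    have hfun : (fun b => wop c k (fun y => ((F y).updateRow k (Pi.single i 1)) a b) x)
        = fun b => wop c k (fun y => F y a b) x := by
      funext b
      congr 1
      funext y
      simp only [Matrix.updateRow_ne h]
    simp only [hD]
    rw [hfun]
  have hswap : ∀ (A : Matrix (Fin n) (Fin n) ℂ) (k a : Fin n) (r w : Fin n → ℂ), a ≠ k →
      ((A.updateRow a r).updateRow k w).det = - ((A.updateRow k r).updateRow a w).det := by
    intro A k a r w h
    have hmat : (A.updateRow a r).updateRow k w
        = ((A.updateRow k r).updateRow a w).submatrix (Equiv.swap k a) id := by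
      ext cdx b
      rcases eq_or_ne cdx k with rfl | hck
      · simp [Matrix.submatrix_apply, Equiv.swap_apply_left, Matrix.updateRow_self]
      · rcases eq_or_ne cdx a with rfl | hca
        · simp only [Matrix.submatrix_apply, Equiv.swap_apply_right, id_eq]
          rw [Matrix.updateRow_ne hck, Matrix.updateRow_self,
            Matrix.updateRow_ne (Ne.symm h), Matrix.updateRow_self]
        · have hsw : Equiv.swap k a cdx = cdx := Equiv.swap_apply_of_ne_of_ne hck hca
          simp only [Matrix.submatrix_apply, hsw, id_eq]
          rw [Matrix.updateRow_ne hck, Matrix.updateRow_ne hca,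
            Matrix.updateRow_ne hca, Matrix.updateRow_ne hck]
    rw [hmat, Matrix.det_permute, Equiv.Perm.sign_swap (Ne.symm h)]
    simp
  have hanti : ∀ k a, D k a = - D a k := by
    intro k a
    rcases eq_or_ne a k with rfl | h
    · simp [hdiag]
    · rw [hoff k a h, hoff a k (Ne.symm h)]
      have hWs : (fun b => wop c a (fun y => F y k b) x)
          = fun b => wop c k (fun y => F y a b) x :=
        funext fun b => (hsymm k a b).symm
      rw [hWs, hswap (F x) k a (Pi.single i 1) _ h, neg_neg]
  have hS : ∑ k, wop c k (fun y => ((F y).updateRow k (Pi.single i 1)).det) x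
      = ∑ k, ∑ a, D k a := Finset.sum_congr rfl fun k _ => hsum k
  rw [hS]
  have key : (∑ k, ∑ a, D k a) = - ∑ k, ∑ a, D k a := by
    calc (∑ k, ∑ a, D k a) = ∑ k, ∑ a, -(D a k) :=
          Finset.sum_congr rfl fun k _ => Finset.sum_congr rfl fun a _ => hanti k a
      _ = - ∑ k, ∑ a, D a k := by simp [Finset.sum_neg_distrib]
      _ = - ∑ a, ∑ k, D a k := by rw [Finset.sum_comm]
      _ = - ∑ k, ∑ a, D k a := rfl
  have h2 : (2 : ℂ) * (∑ k, ∑ a, D k a) = 0 := by linear_combination key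
  exact (mul_eq_zero.mp h2).resolve_left two_ne_zero


lemma wder_eq_wop {n : ℕ} (j : Fin n) (f : EuclideanSpace ℂ (Fin n) → ℂ)
    (x : EuclideanSpace ℂ (Fin n)) : wder j f x = wop (-Complex.I) j f x := by
  simp only [wder, wop, pd]; ring

lemma wderBar_eq_wop {n : ℕ} (j : Fin n) (f : EuclideanSpace ℂ (Fin n) → ℂ)
    (x : EuclideanSpace ℂ (Fin n)) : wderBar j f x = wop Complex.I j f x := rfl


/-- **The Kähler divergence-free identity** `∂_a(g^{i\bar j} det(g_{i\bar j})) = 0`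
(equation (1.4) of the paper) for metrics given by a potential:  with
`G(x) = (∂_j∂_{\bar k} u(x))_{j,k}` and `A(x) = adjugate(G(x))` (so that
`G·A = A·G = det(G)·1`), one has `∑_k ∂_k(A_{ik}) = 0` and `∑_k ∂_{\bar k}(A_{ki}) = 0`. -/
theorem kahler_divergence_free (n : ℕ) (hn : 1 ≤ n)
    (u : EuclideanSpace ℂ (Fin n) → ℝ) (hu : ContDiff ℝ 3 u) (i : Fin n)
    (x : EuclideanSpace ℂ (Fin n)) :
    (∑ k, wder k (fun y => (cHessian u y).adjugate i k) x = 0) ∧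
    (∑ k, wderBar k (fun y => (cHessian u y).adjugate k i) x = 0) := by
  classical
  set ubar : EuclideanSpace ℂ (Fin n) → ℂ := fun y => (u y : ℂ) with hubar
  have hU : ContDiff ℝ 3 ubar := Complex.ofRealCLM.contDiff.comp hu
  have hU2 : ContDiff ℝ 2 ubar := hU.of_le (by norm_num)
  have hC2 : ∀ b : Fin n, ContDiff ℝ 2 (wop Complex.I b ubar) :=
    fun b => contDiff_wop (N := 3) (m := 2) hU (by norm_num) Complex.I b
  have hentry : ∀ a b : Fin n,
      (fun y => cHessian u y a b) = wop (-Complex.I) a (wop Complex.I b ubar) := by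
    intro a b
    funext y
    show wder a (wderBar b ubar) y = _
    rw [wder_eq_wop]
    rfl
  have hG1 : ∀ a b : Fin n, ContDiff ℝ 1 (fun y => cHessian u y a b) := by
    intro a b
    rw [hentry a b]
    exact contDiff_wop (N := 2) (m := 1) (hC2 b) (by norm_num) _ _
  constructor
  · -- part 1
    have hrw : ∀ k : Fin n, wder k (fun y => (cHessian u y).adjugate i k) x
        = wop (-Complex.I) k
            (fun y => ((cHessian u y).updateRow k (Pi.single i 1)).det) x := by
      intro k
      rw [wder_eq_wop]
      congr 1
      funext y
      exact Matrix.adjugate_apply _ i k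
    calc ∑ k, wder k (fun y => (cHessian u y).adjugate i k) x
        = ∑ k, wop (-Complex.I) k
            (fun y => ((cHessian u y).updateRow k (Pi.single i 1)).det) x :=
          Finset.sum_congr rfl fun k _ => hrw k
      _ = 0 := by
          apply main_aux (-Complex.I) (fun y => cHessian u y) i x hG1
          intro k a b
          rw [hentry a b, hentry k b]
          exact wop_comm (-Complex.I) (-Complex.I) k a (hC2 b) x
  · -- part 2
    have hadj : ∀ (A : Matrix (Fin n) (Fin n) ℂ) (k : Fin n),
        A.adjugate k i = ((Aᵀ).updateRow k (Pi.single i 1)).det := by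
      intro A k
      calc A.adjugate k i = (A.adjugate)ᵀ i k := rfl
        _ = (Aᵀ).adjugate i k := by rw [Matrix.adjugate_transpose]
        _ = ((Aᵀ).updateRow k (Pi.single i 1)).det := Matrix.adjugate_apply _ i k
    have hentryT : ∀ a b : Fin n,
        (fun y => (cHessian u y)ᵀ a b) = wop (-Complex.I) b (wop Complex.I a ubar) := by
      intro a b
      have : (fun y => (cHessian u y)ᵀ a b) = fun y => cHessian u y b a := by
        funext y; rw [Matrix.transpose_apply]
      rw [this, hentry b a]
    have hG1T : ∀ a b : Fin n, ContDiff ℝ 1 (fun y => (cHessian u y)ᵀ a b) := by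
      intro a b
      rw [hentryT a b]
      exact contDiff_wop (N := 2) (m := 1) (hC2 a) (by norm_num) _ _
    have hrw : ∀ k : Fin n, wderBar k (fun y => (cHessian u y).adjugate k i) x
        = wop Complex.I k
            (fun y => (((cHessian u y)ᵀ).updateRow k (Pi.single i 1)).det) x := by
      intro k
      rw [wderBar_eq_wop]
      congr 1
      funext y
      exact hadj _ k
    calc ∑ k, wderBar k (fun y => (cHessian u y).adjugate k i) x
        = ∑ k, wop Complex.I k
            (fun y => (((cHessian u y)ᵀ).updateRow k (Pi.single i 1)).det) x :=
          Finset.sum_congr rfl fun k _ => hrw k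
      _ = 0 := by
          apply main_aux Complex.I (fun y => (cHessian u y)ᵀ) i x hG1T
          intro k a b
          rw [hentryT a b, hentryT k b]
          calc wop Complex.I k (wop (-Complex.I) b (wop Complex.I a ubar)) x
              = wop (-Complex.I) b (wop Complex.I k (wop Complex.I a ubar)) x :=
                wop_comm Complex.I (-Complex.I) k b (hC2 a) x
            _ = wop (-Complex.I) b (wop Complex.I a (wop Complex.I k ubar)) x := by
                rw [show (wop Complex.I k (wop Complex.I a ubar) :
                    EuclideanSpace ℂ (Fin n) → ℂ) = wop Complex.I a (wop Complex.I k ubar)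
                  from funext fun y => wop_comm Complex.I Complex.I k a hU2 y]
            _ = wop Complex.I a (wop (-Complex.I) b (wop Complex.I k ubar)) x :=
                (wop_comm Complex.I (-Complex.I) a b (hC2 k) x).symm
end
end

section
/- Let d ≥ 1, let μ and ν be finite measures on ℝ^d, and let K ≥ 1 with K⁻¹·μ ≤ ν ≤ K·μ (as measures). Let A, B : ℝ^d → Matrix (Fin d) (Fin d) ℝ be bounded measurable maps taking values in symmetric positive semidefinite matrices such that ⟨B(x)ξ, ξ⟩ ≥ K⁻¹·⟨A(x)ξ, ξ⟩ for all x ∈ ℝ^d and ξ ∈ ℝ^d. Let λ ≥ 0 and suppose that for every bounded C¹ function u : ℝ^d → ℝ with bounded derivative and ∫ u dμ = 0 one has ∫ ⟨A(x)∇u(x), ∇u(x)⟩ dμ ≥ λ·∫ u² dμ. Then for every bounded C¹ function u : ℝ^d → ℝ with bounded derivative and ∫ u dν = 0 one has ∫ ⟨B(x)∇u(x), ∇u(x)⟩ dν ≥ K⁻³·λ·∫ u² dν. (This is a Euclidean rendition of Lemma 5.2 of the paper: the first nonzero eigenvalue of comparable metrics are comparable, λ₁(h) ≥ ε_{K}·λ₁(g).)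 -/
open MeasureTheory Matrix

lemma aux_integrable {α : Type*} [MeasurableSpace α] (σ : Measure α) [IsFiniteMeasure σ]
    (f : α → ℝ) (hf : Measurable f) (C : ℝ) (hC : ∀ x, |f x| ≤ C) : Integrable f σ :=
  (integrable_const C).mono' hf.aestronglyMeasurable (ae_of_all _ fun x => by simpa using hC x)

lemma aux_integral_le {α : Type*} [MeasurableSpace α] (ρ σ : Measure α)
    [IsFiniteMeasure ρ] [IsFiniteMeasure σ]
    (K : ℝ) (hK : 0 < K) (h : ρ ≤ ENNReal.ofReal K • σ)
    (f : α → ℝ) (hf : Measurable f) (h0 : ∀ x, 0 ≤ f x) (C : ℝ) (hC : ∀ x, f x ≤ C) :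
    ∫ x, f x ∂ρ ≤ K * ∫ x, f x ∂σ := by
  rw [integral_eq_lintegral_of_nonneg_ae (ae_of_all _ h0) hf.aestronglyMeasurable,
      integral_eq_lintegral_of_nonneg_ae (ae_of_all _ h0) hf.aestronglyMeasurable]
  have hfin : ∫⁻ x, ENNReal.ofReal (f x) ∂σ ≠ ⊤ := by
    refine ne_top_of_le_ne_top ?_ (lintegral_mono fun x => ENNReal.ofReal_le_ofReal (hC x))
    simp only [lintegral_const]
    exact ENNReal.mul_ne_top ENNReal.ofReal_ne_top (measure_ne_top σ _)
  have h1 : ∫⁻ x, ENNReal.ofReal (f x) ∂ρ ≤ ENNReal.ofReal K * ∫⁻ x, ENNReal.ofReal (f x) ∂σ := by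
    calc ∫⁻ x, ENNReal.ofReal (f x) ∂ρ
        ≤ ∫⁻ x, ENNReal.ofReal (f x) ∂(ENNReal.ofReal K • σ) := lintegral_mono' h le_rfl
      _ = ENNReal.ofReal K * ∫⁻ x, ENNReal.ofReal (f x) ∂σ := lintegral_smul_measure _ _
  calc (∫⁻ x, ENNReal.ofReal (f x) ∂ρ).toReal
      ≤ (ENNReal.ofReal K * ∫⁻ x, ENNReal.ofReal (f x) ∂σ).toReal :=
        ENNReal.toReal_mono (ENNReal.mul_ne_top ENNReal.ofReal_ne_top hfin) h1
    _ = K * (∫⁻ x, ENNReal.ofReal (f x) ∂σ).toReal := by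
        rw [ENNReal.toReal_mul, ENNReal.toReal_ofReal hK.le]

lemma aux_quad_eq {d : ℕ} (A : Matrix (Fin d) (Fin d) ℝ) (g : Fin d → ℝ) :
    A.mulVec g ⬝ᵥ g = ∑ i, ∑ j, A i j * g j * g i := by
  simp [Matrix.mulVec, dotProduct, Finset.sum_mul]

lemma aux_quad_bound {d : ℕ} (A : Matrix (Fin d) (Fin d) ℝ) (g : Fin d → ℝ)
    (MA M : ℝ) (hMA0 : 0 ≤ MA) (hM0 : 0 ≤ M)
    (hA : ∀ i j, |A i j| ≤ MA) (hg : ∀ i, |g i| ≤ M) :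
    |A.mulVec g ⬝ᵥ g| ≤ (d : ℝ)^2 * (MA * M * M) := by
  rw [aux_quad_eq]
  calc |∑ i, ∑ j, A i j * g j * g i| ≤ ∑ i, |∑ j, A i j * g j * g i| :=
        Finset.abs_sum_le_sum_abs _ _
    _ ≤ ∑ _i : Fin d, ∑ _j : Fin d, (MA * M * M) := by
        refine Finset.sum_le_sum fun i _ => ?_
        refine le_trans (Finset.abs_sum_le_sum_abs _ _) (Finset.sum_le_sum fun j _ => ?_)
        rw [abs_mul, abs_mul]
        have h1 : |A i j| * |g j| ≤ MA * M :=
          mul_le_mul (hA i j) (hg j) (abs_nonneg _) hMA0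
        exact mul_le_mul h1 (hg i) (abs_nonneg _) (mul_nonneg hMA0 hM0)
    _ = (d : ℝ)^2 * (MA * M * M) := by
        simp [Finset.sum_const, Finset.card_univ, nsmul_eq_mul]; ring

lemma aux_quad_meas {d : ℕ} {X : Type*} [MeasurableSpace X]
    (A : X → Matrix (Fin d) (Fin d) ℝ) (g : X → Fin d → ℝ)
    (hA : ∀ i j, Measurable fun x => A x i j) (hg : ∀ i, Measurable fun x => g x i) :
    Measurable fun x => (A x).mulVec (g x) ⬝ᵥ g x := by
  have h : (fun x => (A x).mulVec (g x) ⬝ᵥ g x)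
      = fun x => ∑ i, ∑ j, A x i j * g x j * g x i := funext fun x => aux_quad_eq _ _
  rw [h]
  exact Finset.measurable_sum _ fun i _ =>
    Finset.measurable_sum _ fun j _ => ((hA i j).mul (hg j)).mul (hg i)


/-- The gradient of `u : ℝ^d → ℝ` at `x`, as the vector of partial derivatives in the
standard coordinate directions. -/
noncomputable def grad {d : ℕ} (u : EuclideanSpace ℝ (Fin d) → ℝ)
    (x : EuclideanSpace ℝ (Fin d)) : Fin d → ℝ :=
  fun i => fderiv ℝ u x (EuclideanSpace.single i (1 : ℝ))

/-- **Comparability of first nonzero eigenvalues** (Euclidean rendition of Lemma 5.2 of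
the paper, `λ₁(h) ≥ ε_K·λ₁(g)`).  If `K⁻¹·μ ≤ ν ≤ K·μ`, `A, B` are bounded measurable
symmetric-positive-semidefinite-matrix-valued with `⟨Bξ,ξ⟩ ≥ K⁻¹⟨Aξ,ξ⟩`, and the Poincaré
inequality `∫⟨A∇u,∇u⟩dμ ≥ λ∫u²dμ` holds over `μ`-mean-zero `u`, then
`∫⟨B∇u,∇u⟩dν ≥ K⁻³λ∫u²dν` over `ν`-mean-zero `u`. -/
theorem eigenvalue_comparison (d : ℕ) (hd : 1 ≤ d)
    (μ ν : Measure (EuclideanSpace ℝ (Fin d))) [IsFiniteMeasure μ] [IsFiniteMeasure ν]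
    (K : ℝ) (hK : 1 ≤ K)
    (hμν : ENNReal.ofReal K⁻¹ • μ ≤ ν) (hνμ : ν ≤ ENNReal.ofReal K • μ)
    (A B : EuclideanSpace ℝ (Fin d) → Matrix (Fin d) (Fin d) ℝ)
    (hAmeas : ∀ i j, Measurable fun x => A x i j)
    (hBmeas : ∀ i j, Measurable fun x => B x i j)
    (hAbdd : ∃ M : ℝ, ∀ x i j, |A x i j| ≤ M)
    (hBbdd : ∃ M : ℝ, ∀ x i j, |B x i j| ≤ M)
    (hApsd : ∀ x, (A x).IsSymm ∧ (A x).PosSemidef)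
    (hBpsd : ∀ x, (B x).IsSymm ∧ (B x).PosSemidef)
    (hAB : ∀ x (ξ : Fin d → ℝ), K⁻¹ * ((A x).mulVec ξ ⬝ᵥ ξ) ≤ (B x).mulVec ξ ⬝ᵥ ξ)
    (lam : ℝ) (hlam : 0 ≤ lam)
    (hPoincare : ∀ u : EuclideanSpace ℝ (Fin d) → ℝ, ContDiff ℝ 1 u →
      (∃ M : ℝ, ∀ x, |u x| ≤ M ∧ ‖fderiv ℝ u x‖ ≤ M) →
      (∫ x, u x ∂μ) = 0 →
      lam * ∫ x, u x ^ 2 ∂μ ≤ ∫ x, (A x).mulVec (grad u x) ⬝ᵥ grad u x ∂μ) :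
    ∀ u : EuclideanSpace ℝ (Fin d) → ℝ, ContDiff ℝ 1 u →
      (∃ M : ℝ, ∀ x, |u x| ≤ M ∧ ‖fderiv ℝ u x‖ ≤ M) →
      (∫ x, u x ∂ν) = 0 →
      (K ^ 3)⁻¹ * lam * ∫ x, u x ^ 2 ∂ν ≤
        ∫ x, (B x).mulVec (grad u x) ⬝ᵥ grad u x ∂ν := by
  intro u hu hub hmean
  obtain ⟨M, hM⟩ := hub
  obtain ⟨MA, hMA⟩ := hAbdd
  obtain ⟨MB, hMB⟩ := hBbdd
  have hK0 : (0:ℝ) < K := lt_of_lt_of_le one_pos hK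
  have i0 : Fin d := ⟨0, hd⟩
  have hM0 : 0 ≤ M := le_trans (abs_nonneg _) (hM 0).1
  have hMA0 : 0 ≤ MA := le_trans (abs_nonneg _) (hMA 0 i0 i0)
  have hMB0 : 0 ≤ MB := le_trans (abs_nonneg _) (hMB 0 i0 i0)
  -- measure comparison in the other direction
  have hKK : ENNReal.ofReal K * ENNReal.ofReal K⁻¹ = 1 := by
    rw [← ENNReal.ofReal_mul hK0.le, mul_inv_cancel₀ hK0.ne', ENNReal.ofReal_one]
  have hμν' : μ ≤ ENNReal.ofReal K • ν := by
    rw [Measure.le_iff']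
    intro s
    have h1 : (ENNReal.ofReal K⁻¹ • μ) s ≤ ν s := Measure.le_iff'.mp hμν s
    simp only [Measure.smul_apply, smul_eq_mul] at h1 ⊢
    calc μ s = ENNReal.ofReal K * (ENNReal.ofReal K⁻¹ * μ s) := by
          rw [← mul_assoc, hKK, one_mul]
      _ ≤ ENNReal.ofReal K * ν s := by gcongr
  -- gradient facts
  have humeas : Measurable u := hu.continuous.measurable
  have hgmeas : ∀ i, Measurable fun x => grad u x i := fun i =>
    measurable_fderiv_apply_const ℝ u (EuclideanSpace.single i 1)
  have hgbdd : ∀ x i, |grad u x i| ≤ M := fun x i => by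
    have h1 := (fderiv ℝ u x).le_opNorm (EuclideanSpace.single i (1:ℝ))
    have h2 : ‖EuclideanSpace.single i (1:ℝ)‖ = 1 := by
      simp [EuclideanSpace.norm_single]
    calc |grad u x i| = ‖fderiv ℝ u x (EuclideanSpace.single i (1:ℝ))‖ := (Real.norm_eq_abs _).symm
      _ ≤ ‖fderiv ℝ u x‖ * ‖EuclideanSpace.single i (1:ℝ)‖ := h1
      _ = ‖fderiv ℝ u x‖ := by rw [h2, mul_one]
      _ ≤ M := (hM x).2
  -- quadratic forms
  have hQAmeas : Measurable fun x => (A x).mulVec (grad u x) ⬝ᵥ grad u x :=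
    aux_quad_meas A (grad u) hAmeas hgmeas
  have hQBmeas : Measurable fun x => (B x).mulVec (grad u x) ⬝ᵥ grad u x :=
    aux_quad_meas B (grad u) hBmeas hgmeas
  have hQAbdd : ∀ x, |(A x).mulVec (grad u x) ⬝ᵥ grad u x| ≤ (d:ℝ)^2 * (MA * M * M) :=
    fun x => aux_quad_bound _ _ _ _ hMA0 hM0 (hMA x) (hgbdd x)
  have hQBbdd : ∀ x, |(B x).mulVec (grad u x) ⬝ᵥ grad u x| ≤ (d:ℝ)^2 * (MB * M * M) :=
    fun x => aux_quad_bound _ _ _ _ hMB0 hM0 (hMB x) (hgbdd x)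
  have hQA0 : ∀ x, 0 ≤ (A x).mulVec (grad u x) ⬝ᵥ grad u x := fun x => by
    have h := (hApsd x).2.dotProduct_mulVec_nonneg (grad u x)
    simpa [dotProduct_comm] using h
  -- the recentered function
  set c : ℝ := (∫ x, u x ∂μ) / (μ Set.univ).toReal with hcdef
  set v : EuclideanSpace ℝ (Fin d) → ℝ := fun x => u x - c with hvdef
  have hv : ContDiff ℝ 1 v := hu.sub contDiff_const
  have hfv : ∀ x, fderiv ℝ v x = fderiv ℝ u x := fun x => fderiv_sub_const c
  have hgv : grad v = grad u := funext fun x => funext fun i => by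
    simp only [grad, hfv]
  have hvbdd : ∀ x, |v x| ≤ M + |c| := fun x => by
    have := abs_add_le (u x) (-c)
    simp only [hvdef, sub_eq_add_neg]
    calc |u x + -c| ≤ |u x| + |(-c)| := abs_add_le _ _
      _ ≤ M + |c| := by rw [abs_neg]; exact add_le_add_left (hM x).1 _
  have hvmeas : Measurable v := humeas.sub measurable_const
  have hiuμ : Integrable u μ := aux_integrable μ u humeas M (fun x => (hM x).1)
  have hiuν : Integrable u ν := aux_integrable ν u humeas M (fun x => (hM x).1)
  have hiu2ν : Integrable (fun x => u x ^ 2) ν :=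
    aux_integrable ν _ (humeas.pow_const 2) (M^2) (fun x => by
      rw [abs_pow]; exact pow_le_pow_left₀ (abs_nonneg _) (hM x).1 2)
  have hvmean : ∫ x, v x ∂μ = 0 := by
    rw [hvdef]
    rw [integral_sub hiuμ (integrable_const c), integral_const, smul_eq_mul]
    by_cases hμ0 : (μ Set.univ).toReal = 0
    · have hμz : μ Set.univ = 0 := by
        rcases (ENNReal.toReal_eq_zero_iff _).mp hμ0 with h | h
        · exact h
        · exact absurd h (measure_ne_top μ _)
      have hμe : μ = 0 := Measure.measure_univ_eq_zero.mp hμz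
      have h1 : ∫ x, u x ∂μ = 0 := by rw [hμe]; simp
      rw [h1, measureReal_def, hμ0, zero_mul, sub_zero]
    · rw [hcdef, measureReal_def, mul_div_cancel₀ _ hμ0, sub_self]
  -- Poincaré for v
  have hP := hPoincare v hv ⟨M + |c|, fun x => ⟨hvbdd x, by
      rw [hfv]; exact le_trans (hM x).2 (le_add_of_nonneg_right (abs_nonneg c))⟩⟩ hvmean
  rw [hgv] at hP
  -- step 1 : ∫ u² dν ≤ ∫ v² dν
  have step1 : ∫ x, u x ^ 2 ∂ν ≤ ∫ x, v x ^ 2 ∂ν := by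
    have hexp : (fun x => v x ^ 2) = fun x => (u x ^ 2 - (2*c) * u x) + c^2 :=
      funext fun x => by simp only [hvdef]; ring
    have hi1 : Integrable (fun x => u x ^ 2 - (2*c) * u x) ν := hiu2ν.sub (hiuν.const_mul _)
    rw [hexp, integral_add hi1 (integrable_const _),
        integral_sub hiu2ν (hiuν.const_mul _), integral_const_mul, hmean, mul_zero, sub_zero,
        integral_const, smul_eq_mul, measureReal_def]
    have : 0 ≤ (ν Set.univ).toReal * c^2 :=
      mul_nonneg ENNReal.toReal_nonneg (sq_nonneg c)
    linarith
  -- step 2 : ∫ v² dν ≤ K * ∫ v² dμ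
  have step2 : ∫ x, v x ^ 2 ∂ν ≤ K * ∫ x, v x ^ 2 ∂μ := by
    refine aux_integral_le ν μ K hK0 hνμ _ (hvmeas.pow_const 2) (fun x => sq_nonneg _)
      ((M + |c|)^2) (fun x => ?_)
    calc v x ^ 2 = |v x| ^ 2 := (sq_abs _).symm
      _ ≤ (M + |c|)^2 := pow_le_pow_left₀ (abs_nonneg _) (hvbdd x) 2
  -- step 3 : ∫ QA dμ ≤ K * ∫ QA dν
  have step3 : ∫ x, (A x).mulVec (grad u x) ⬝ᵥ grad u x ∂μ
      ≤ K * ∫ x, (A x).mulVec (grad u x) ⬝ᵥ grad u x ∂ν :=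
    aux_integral_le μ ν K hK0 hμν' _ hQAmeas hQA0 ((d:ℝ)^2 * (MA * M * M))
      (fun x => le_trans (le_abs_self _) (hQAbdd x))
  -- step 4 : ∫ QA dν ≤ K * ∫ QB dν
  have step4 : ∫ x, (A x).mulVec (grad u x) ⬝ᵥ grad u x ∂ν
      ≤ K * ∫ x, (B x).mulVec (grad u x) ⬝ᵥ grad u x ∂ν := by
    have hiQA : Integrable (fun x => (A x).mulVec (grad u x) ⬝ᵥ grad u x) ν :=
      aux_integrable ν _ hQAmeas _ hQAbdd
    have hiQB : Integrable (fun x => (B x).mulVec (grad u x) ⬝ᵥ grad u x) ν :=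
      aux_integrable ν _ hQBmeas _ hQBbdd
    have hpt : ∀ x, (A x).mulVec (grad u x) ⬝ᵥ grad u x
        ≤ K * ((B x).mulVec (grad u x) ⬝ᵥ grad u x) := fun x => by
      have h := hAB x (grad u x)
      rwa [inv_mul_le_iff₀ hK0] at h
    calc ∫ x, (A x).mulVec (grad u x) ⬝ᵥ grad u x ∂ν
        ≤ ∫ x, K * ((B x).mulVec (grad u x) ⬝ᵥ grad u x) ∂ν :=
          integral_mono hiQA (hiQB.const_mul K) hpt
      _ = K * ∫ x, (B x).mulVec (grad u x) ⬝ᵥ grad u x ∂ν := integral_const_mul _ _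
  -- combine
  have key : lam * ∫ x, u x ^ 2 ∂ν
      ≤ K^3 * ∫ x, (B x).mulVec (grad u x) ⬝ᵥ grad u x ∂ν := by
    calc lam * ∫ x, u x ^ 2 ∂ν
        ≤ lam * ∫ x, v x ^ 2 ∂ν := mul_le_mul_of_nonneg_left step1 hlam
      _ ≤ lam * (K * ∫ x, v x ^ 2 ∂μ) := mul_le_mul_of_nonneg_left step2 hlam
      _ = K * (lam * ∫ x, v x ^ 2 ∂μ) := by ring
      _ ≤ K * ∫ x, (A x).mulVec (grad u x) ⬝ᵥ grad u x ∂μ :=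
          mul_le_mul_of_nonneg_left hP hK0.le
      _ ≤ K * (K * ∫ x, (A x).mulVec (grad u x) ⬝ᵥ grad u x ∂ν) :=
          mul_le_mul_of_nonneg_left step3 hK0.le
      _ ≤ K * (K * (K * ∫ x, (B x).mulVec (grad u x) ⬝ᵥ grad u x ∂ν)) := by
          refine mul_le_mul_of_nonneg_left (mul_le_mul_of_nonneg_left step4 hK0.le) hK0.le
      _ = K^3 * ∫ x, (B x).mulVec (grad u x) ⬝ᵥ grad u x ∂ν := by ring
  rw [mul_assoc, inv_mul_le_iff₀ (pow_pos hK0 3)]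
  exact key
end
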